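/- Every positive concave mapping is a standard interference mapping: if g : ℝⁿ₊ → int(ℝⁿ₊) is concave with respect to the componentwise order, then g is monotone (x ≤ y implies g(x) ≤ g(y)) and scalable (for every x ∈ ℝⁿ₊ and every λ > 1, g(λx) is strictly componentwise less than λ·g(x)). -/

import Mathlib

/-- Every positive concave mapping is a standard interference mapping
(monotone and scalable). -/
theorem positive_concave_is_standard_interference {n : ℕ}
    (g : (Fin n → ℝ) → (Fin n → ℝ))
    (hpos : ∀ x : Fin n → ℝ, 0 ≤ x → ∀ i, 0 < g x i)
    (hconc : ∀ x y : Fin n → ℝ, 0 ≤ x → 0 ≤ y → ∀ t : ℝ, 0 < t → t < 1 →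
      t • g x + (1 - t) • g y ≤ g (t • x + (1 - t) • y)) :
    (∀ x y : Fin n → ℝ, 0 ≤ x → 0 ≤ y → x ≤ y → g x ≤ g y) ∧
    (∀ x : Fin n → ℝ, 0 ≤ x → ∀ lam : ℝ, 1 < lam → ∀ i, g (lam • x) i < lam * g x i) := by
  constructor
  · intro x y hx hy hxy
    have key : ∀ t : ℝ, 0 < t → t < 1 → ∀ i, (1 - t) * g x i ≤ g y i := by
      intro t ht ht1 i
      set w : Fin n → ℝ := fun j => x j + t⁻¹ * (y j - x j) with hw
      have hw0 : (0 : Fin n → ℝ) ≤ w := by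
        intro j
        have h1 := hxy j
        have h2 : (0:ℝ) ≤ x j := by simpa using hx j
        have h3 : 0 ≤ t⁻¹ * (y j - x j) := mul_nonneg (by positivity) (by linarith)
        have : (0:ℝ) ≤ x j + t⁻¹ * (y j - x j) := by linarith
        simpa [hw] using this
      have heq : t • w + (1 - t) • x = y := by
        funext j
        simp only [hw, Pi.add_apply, Pi.smul_apply, smul_eq_mul]
        field_simp
        ring
      have h := hconc w x hw0 hx t ht ht1
      rw [heq] at h
      have hi := h i
      simp only [Pi.add_apply, Pi.smul_apply, smul_eq_mul] at hi
      have hwpos := hpos w hw0 i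
      nlinarith
    intro i
    by_contra hcon
    push_neg at hcon
    have hgx := hpos x hx i
    have hgy := hpos y hy i
    have hd : 0 < g x i - g y i := by linarith
    set t := (g x i - g y i) / (2 * g x i) with ht
    have ht0 : 0 < t := by positivity
    have ht1 : t < 1 := by
      rw [ht, div_lt_one (by positivity)]
      linarith
    have := key t ht0 ht1 i
    rw [ht] at this
    have h2 : (1 - (g x i - g y i) / (2 * g x i)) * g x i = g x i - (g x i - g y i) / 2 := by
      field_simp
    rw [h2] at this
    linarith
  · intro x hx lam hlam i
    have hl0 : 0 < lam := by linarith
    have ht0 : 0 < lam⁻¹ := by positivity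
    have ht1 : lam⁻¹ < 1 := by
      rw [inv_lt_one_iff₀]; right; exact hlam
    have hlx : (0 : Fin n → ℝ) ≤ lam • x := by
      intro j
      have := hx j
      have : (0:ℝ) ≤ lam * x j := mul_nonneg hl0.le this
      simpa using this
    have h0 : (0 : Fin n → ℝ) ≤ 0 := le_refl _
    have h := hconc (lam • x) 0 hlx h0 lam⁻¹ ht0 ht1
    have heq : lam⁻¹ • (lam • x) + (1 - lam⁻¹) • (0 : Fin n → ℝ) = x := by
      funext j
      simp [smul_eq_mul]
      field_simp
    rw [heq] at h
    have hi := h i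
    simp only [Pi.add_apply, Pi.smul_apply, smul_eq_mul] at hi
    have hg0 := hpos 0 h0 i
    have hgl := hpos (lam • x) hlx i
    have hc : lam * lam⁻¹ = 1 := mul_inv_cancel₀ hl0.ne'
    have hi2 := mul_le_mul_of_nonneg_left hi hl0.le
    have hi3 : g (lam • x) i + (lam - 1) * g 0 i ≤ lam * g x i := by nlinarith [hi2, hc]
    nlinarith [hi3, hg0]
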